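/- Let Γ be a finite connected graph, e an edge of Γ, and suppose that for every edge e' (including e' = e in the degenerate sense), the graph Γ \ {e} is connected and Γ \ {e, e'} is connected for all non-bridge edges e'. Then there exist two cycles c₁ and c₂ in the cycle space of Γ whose edge-intersection is exactly {e}. -/

import Mathlib

/-- An element of the cycle space of `G` over `ℤ/2ℤ`: a set of edges of `G` in which
every vertex has even degree. -/
def SimpleGraph.IsCycleSpaceElement {V : Type*} [DecidableEq V] (G : SimpleGraph V)
    (c : Finset (Sym2 V)) : Prop :=
  ↑c ⊆ G.edgeSet ∧ ∀ v : V, Even (c.filter (fun f => v ∈ f)).card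

set_option linter.unusedSectionVars false
set_option maxHeartbeats 1000000

open SimpleGraph



namespace CycleSpaceHelpers

variable {V : Type*} [DecidableEq V] {H : SimpleGraph V}

/-- Parity of incidences of a trail's edge set. -/
lemma trail_parity {u v : V} (T : H.Walk u v) (hT : T.IsTrail) (x : V) :
    Even ((T.edges.toFinset.filter (fun f => x ∈ f)).card) ↔ ((x = u) ↔ (x = v)) := by
  induction T with
  | nil => simp
  | @cons a b c hadj T ih =>
    have hT' : T.IsTrail := hT.of_cons
    have hnotmem : s(a, b) ∉ T.edges := by
      have := hT.edges_nodup
      simp [Walk.edges_cons] at this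
      exact this.1
    have ih' := ih hT'
    rw [Walk.edges_cons, List.toFinset_cons]
    have hab : a ≠ b := hadj.ne
    by_cases hx : x ∈ s(a, b)
    · rw [Finset.filter_insert, if_pos hx, Finset.card_insert_of_notMem (by simp [hnotmem]),
        Nat.even_add_one, ih']
      rw [Sym2.mem_iff] at hx
      by_cases h1 : x = a <;> by_cases h2 : x = b <;> by_cases h3 : x = c <;> simp_all
    · rw [Finset.filter_insert, if_neg hx, ih']
      have hxa : x ≠ a := fun h => hx (by simp [h])
      have hxb : x ≠ b := fun h => hx (by simp [h])
      simp [hxa, hxb]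

lemma exists_crossing_dart {x y : V} (W : H.Walk x y) (A : Set V) (hx : x ∈ A) (hy : y ∉ A) :
    ∃ d ∈ W.darts, d.fst ∈ A ∧ d.snd ∉ A := by
  induction W with
  | nil => exact absurd hx hy
  | @cons a b c hadj W ih =>
    by_cases hb : b ∈ A
    · obtain ⟨d, hd, h1, h2⟩ := ih hb hy
      exact ⟨d, by simp [hd], h1, h2⟩
    · exact ⟨⟨(a, b), hadj⟩, by simp, hx, hb⟩

lemma support_not_mem_of_prefix {c b : V} (W : H.Walk c b) (A : Set V)
    (hpre : ∀ d ∈ W.darts, d.snd ∈ A → d.fst ∈ A) (hc : c ∉ A) : ∀ x ∈ W.support, x ∉ A := by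
  induction W with
  | nil => intro x hx; simp at hx; subst hx; exact hc
  | @cons a b c' hadj W ih =>
    intro x hx
    rw [Walk.support_cons, List.mem_cons] at hx
    rcases hx with rfl | hx
    · exact hc
    · have hb : b ∉ A := fun hb => hc (hpre ⟨(a, b), hadj⟩ (by simp) hb)
      exact ih (fun d hd => hpre d (by simp [hd])) hb x hx

lemma crossing_dart_unique {x y : V} (W : H.Walk x y) (A : Set V)
    (hpre : ∀ d ∈ W.darts, d.snd ∈ A → d.fst ∈ A) :
    ∀ d ∈ W.darts, ∀ d' ∈ W.darts, d.fst ∈ A → d.snd ∉ A → d'.fst ∈ A → d'.snd ∉ A → d = d' := by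
  induction W with
  | nil => intro d hd; simp at hd
  | @cons a b c hadj W ih =>
    intro d hd d' hd' h1 h2 h1' h2'
    rw [Walk.darts_cons, List.mem_cons] at hd hd'
    have hpre' : ∀ d ∈ W.darts, d.snd ∈ A → d.fst ∈ A := fun d hd => hpre d (by simp [hd])
    have key : ∀ d₀ ∈ W.darts, d₀.fst ∈ A → b ∈ A := by
      intro d₀ hd₀ hfst
      by_contra hb
      exact support_not_mem_of_prefix W A hpre' hb d₀.fst
        (Walk.dart_fst_mem_support_of_mem_darts W hd₀) hfst
    rcases hd with rfl | hd <;> rcases hd' with rfl | hd'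
    · rfl
    · exact absurd (key d' hd' h1') h2
    · exact absurd (key d hd h1) h2'
    · exact ih hpre' d hd d' hd' h1 h2 h1' h2'

/-- Residual reachability: there is a path `Q` from `u` to `v` that uses edges of `P`
only in the reverse direction. -/
lemma exists_residual_path {u v : V} (P : H.Walk u v) (hP : P.IsPath)
    (hyp : ∀ f ∈ H.edgeSet, (H.deleteEdges {f}).Reachable u v) :
    ∃ Q : H.Walk u v, Q.IsPath ∧ ∀ d ∈ Q.darts, d.edge ∈ P.edges → d.symm ∈ P.darts := by
  classical
  set Rel : V → V → Prop := fun x y =>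
    ∃ h : H.Adj x y, ((⟨(x, y), h⟩ : H.Dart).edge ∈ P.edges →
      (⟨(y, x), h.symm⟩ : H.Dart) ∈ P.darts) with hRel
  set A : Set V := {x | Relation.ReflTransGen Rel u x} with hA
  have huA : u ∈ A := Relation.ReflTransGen.refl
  have hpre : ∀ d ∈ P.darts, d.snd ∈ A → d.fst ∈ A := by
    rintro ⟨⟨a, b⟩, hab⟩ hd hbA
    refine Relation.ReflTransGen.tail hbA ⟨hab.symm, fun _ => ?_⟩
    exact hd
  have hvA : v ∈ A := by
    by_contra hvA
    obtain ⟨dc, hdc, hdcA, hdcnA⟩ := exists_crossing_dart P A huA hvA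
    obtain ⟨W⟩ := hyp dc.edge dc.edge_mem
    -- propagate membership in A along W
    have hprop : ∀ {x y : V} (W : (H.deleteEdges {dc.edge}).Walk x y), x ∈ A → y ∈ A := by
      intro x y W
      induction W with
      | nil => exact id
      | @cons a b c hadj W ih =>
        intro haA
        apply ih
        rw [deleteEdges_adj] at hadj
        obtain ⟨hadj, hne⟩ := hadj
        by_cases hPe : s(a, b) ∈ P.edges
        · obtain ⟨dp, hdp, hdpe⟩ := List.mem_map.mp (show s(a,b) ∈ P.darts.map Dart.edge from hPe)
          rcases dart_edge_eq_mk'_iff'.mp hdpe with ⟨h1, h2⟩ | ⟨h1, h2⟩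
          · -- dp is the forward dart (a, b)
            by_cases hbA : b ∈ A
            · exact hbA
            · exfalso
              have : dp = dc := crossing_dart_unique P A hpre dp hdp dc hdc
                (h1 ▸ haA) (h2 ▸ hbA) hdcA hdcnA
              exact hne (by rw [← this, ← hdpe]; simp)
          · -- dp is the backward dart (b, a)
            refine Relation.ReflTransGen.tail haA ⟨hadj, fun _ => ?_⟩
            have : dp = ⟨(b, a), hadj.symm⟩ := Dart.ext _ _ (by ext <;> simp [h1, h2])
            exact this ▸ hdp
        · exact Relation.ReflTransGen.tail haA ⟨hadj, fun h => absurd (by simpa using h) hPe⟩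
    exact hvA (hprop W huA)
  -- extract a walk from the ReflTransGen chain
  have hwalk : ∀ x, Relation.ReflTransGen Rel u x →
      ∃ W : H.Walk u x, ∀ d ∈ W.darts, d.edge ∈ P.edges → d.symm ∈ P.darts := by
    intro x hx
    induction hx with
    | refl => exact ⟨Walk.nil, by simp⟩
    | @tail b c hb hbc ih =>
      obtain ⟨W, hW⟩ := ih
      obtain ⟨hadj, hres⟩ := hbc
      refine ⟨W.concat hadj, ?_⟩
      intro d hd
      rw [Walk.darts_concat, List.concat_eq_append, List.mem_append, List.mem_singleton] at hd
      rcases hd with hd | hd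
      · exact hW d hd
      · subst hd
        exact hres
  obtain ⟨W, hW⟩ := hwalk v hvA
  exact ⟨W.bypass, W.bypass_isPath, fun d hd => hW d (W.darts_bypass_subset hd)⟩

/-- A dart of a path whose first coordinate is `a` belongs to the darts of `dropUntil a`. -/
lemma dart_mem_dropUntil {x y : V} (P : H.Walk x y) (hP : P.IsPath) {d : H.Dart}
    (hd : d ∈ P.darts) (ha : d.fst ∈ P.support) :
    d ∈ (P.dropUntil d.fst ha).darts := by
  have hsplit : P.darts = (P.takeUntil d.fst ha).darts ++ (P.dropUntil d.fst ha).darts := by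
    rw [← Walk.darts_append, Walk.take_spec]
  rw [hsplit, List.mem_append] at hd
  rcases hd with hd | hd
  · exfalso
    have h1 : (P.takeUntil d.fst ha).darts.map (·.fst) ++ [d.fst]
        = (P.takeUntil d.fst ha).support := Walk.map_fst_darts_append _
    have h2 : (P.takeUntil d.fst ha).support.Nodup := (hP.takeUntil ha).support_nodup
    rw [← h1] at h2
    have : d.fst ∈ (P.takeUntil d.fst ha).darts.map (·.fst) :=
      List.mem_map_of_mem (f := fun d : H.Dart => d.fst) hd
    exact (List.disjoint_of_nodup_append h2) this (by simp)
  · exact hd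

/-- Core uncrossing induction: from a pair of paths whose common edges are all traversed in
opposite directions, get a pair of edge-disjoint paths. -/
lemma exists_disjoint_paths {u v : V} :
    ∀ n (P Q : H.Walk u v), P.IsPath → Q.IsPath →
    (∀ d₁ ∈ P.darts, ∀ d₂ ∈ Q.darts, d₁.edge = d₂.edge → d₂ = d₁.symm) →
    (P.edges.toFinset ∩ Q.edges.toFinset).card ≤ n →
    ∃ P' Q' : H.Walk u v, P'.IsPath ∧ Q'.IsPath ∧
      P'.edges.toFinset ∩ Q'.edges.toFinset = ∅ := by
  intro n
  induction n with
  | zero =>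
    intro P Q hP hQ _ hcard
    exact ⟨P, Q, hP, hQ, Finset.card_eq_zero.mp (Nat.le_zero.mp hcard)⟩
  | succ n ih =>
    intro P Q hP hQ hinv hcard
    by_cases hempty : P.edges.toFinset ∩ Q.edges.toFinset = ∅
    · exact ⟨P, Q, hP, hQ, hempty⟩
    obtain ⟨g, hg⟩ := Finset.nonempty_iff_ne_empty.mpr hempty
    rw [Finset.mem_inter, List.mem_toFinset, List.mem_toFinset] at hg
    obtain ⟨hgP, hgQ⟩ := hg
    -- get the darts over g
    obtain ⟨d₁, hd₁, hd₁e⟩ := List.mem_map.mp (show g ∈ P.darts.map Dart.edge from hgP)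
    obtain ⟨dq, hdq, hdqe⟩ := List.mem_map.mp (show g ∈ Q.darts.map Dart.edge from hgQ)
    have hdqs : dq = d₁.symm := hinv d₁ hd₁ dq hdq (by rw [hd₁e, hdqe])
    subst hdqs
    set a := d₁.fst with hadef
    set b := d₁.snd with hbdef
    have hab : a ≠ b := d₁.adj.ne
    -- decompositions
    have haP : a ∈ P.support := Walk.dart_fst_mem_support_of_mem_darts P hd₁
    set P1 := P.takeUntil a haP with hP1
    set Pa := P.dropUntil a haP with hPa
    have hPa_path : Pa.IsPath := hP.dropUntil haP
    have hP1_path : P1.IsPath := hP.takeUntil haP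
    have hd₁Pa : d₁ ∈ Pa.darts := dart_mem_dropUntil P hP hd₁ haP
    have hbPa : b ∈ Pa.support := Walk.dart_snd_mem_support_of_mem_darts Pa hd₁Pa
    set P2 := Pa.dropUntil b hbPa with hP2
    have hP2_path : P2.IsPath := hPa_path.dropUntil hbPa
    have hbQ : b ∈ Q.support := Walk.dart_fst_mem_support_of_mem_darts Q hdq
    set Q1 := Q.takeUntil b hbQ with hQ1
    set Qb := Q.dropUntil b hbQ with hQb
    have hQb_path : Qb.IsPath := hQ.dropUntil hbQ
    have hQ1_path : Q1.IsPath := hQ.takeUntil hbQ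
    have hdqQb : d₁.symm ∈ Qb.darts := dart_mem_dropUntil Q hQ hdq hbQ
    have haQb : a ∈ Qb.support := Walk.dart_snd_mem_support_of_mem_darts Qb hdqQb
    set Q2 := Qb.dropUntil a haQb with hQ2
    have hQ2_path : Q2.IsPath := hQb_path.dropUntil haQb
    -- edge facts
    have hPsplit : P.edges = P1.edges ++ Pa.edges := by
      rw [← Walk.edges_append, Walk.take_spec]
    have hPnodup : (P1.edges ++ Pa.edges).Nodup := hPsplit ▸ hP.isTrail.edges_nodup
    have hdisjP : List.Disjoint P1.edges Pa.edges := List.disjoint_of_nodup_append hPnodup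
    have hQsplit : Q.edges = Q1.edges ++ Qb.edges := by
      rw [← Walk.edges_append, Walk.take_spec]
    have hQnodup : (Q1.edges ++ Qb.edges).Nodup := hQsplit ▸ hQ.isTrail.edges_nodup
    have hdisjQ : List.Disjoint Q1.edges Qb.edges := List.disjoint_of_nodup_append hQnodup
    have hgPa : g ∈ Pa.edges := by
      rw [← hd₁e]; exact List.mem_map_of_mem (f := Dart.edge) hd₁Pa
    have hgQb : g ∈ Qb.edges := by
      rw [← hdqe]; exact List.mem_map_of_mem (f := Dart.edge) hdqQb
    have hgP1 : g ∉ P1.edges := fun h => hdisjP h hgPa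
    have hgQ1 : g ∉ Q1.edges := fun h => hdisjQ h hgQb
    have hP2sub : P2.edges ⊆ Pa.edges := Walk.edges_dropUntil_subset Pa hbPa
    have hQ2sub : Q2.edges ⊆ Qb.edges := Walk.edges_dropUntil_subset Qb haQb
    -- a ∉ P2.support
    have haP2 : a ∉ P2.support := by
      intro hmem
      have hsupp : Pa.support = (Pa.takeUntil b hbPa).support ++ P2.support.tail := by
        rw [← Walk.support_append, Walk.take_spec]
      have hnd : ((Pa.takeUntil b hbPa).support ++ P2.support.tail).Nodup :=
        hsupp ▸ hPa_path.support_nodup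
      have h1 : a ∈ (Pa.takeUntil b hbPa).support := Walk.start_mem_support _
      have h2 : a ∈ P2.support.tail := by
        rw [Walk.support_eq_cons P2, List.mem_cons] at hmem
        rcases hmem with h | h
        · exact absurd h hab
        · exact h
      exact (List.disjoint_of_nodup_append hnd) h1 h2
    -- b ∉ Q2.support
    have hbQ2 : b ∉ Q2.support := by
      intro hmem
      have hsupp : Qb.support = (Qb.takeUntil a haQb).support ++ Q2.support.tail := by
        rw [← Walk.support_append, Walk.take_spec]
      have hnd : ((Qb.takeUntil a haQb).support ++ Q2.support.tail).Nodup :=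
        hsupp ▸ hQb_path.support_nodup
      have h1 : b ∈ (Qb.takeUntil a haQb).support := Walk.start_mem_support _
      have h2 : b ∈ Q2.support.tail := by
        rw [Walk.support_eq_cons Q2, List.mem_cons] at hmem
        rcases hmem with h | h
        · exact absurd h hab.symm
        · exact h
      exact (List.disjoint_of_nodup_append hnd) h1 h2
    have hge : g = s(a, b) := by rw [← hd₁e]; rfl
    have hgP2 : g ∉ P2.edges := by
      intro h
      rw [hge] at h
      exact haP2 (Walk.fst_mem_support_of_mem_edges P2 h)
    have hgQ2 : g ∉ Q2.edges := by
      intro h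
      rw [hge] at h
      exact hbQ2 (Walk.snd_mem_support_of_mem_edges Q2 h)
    -- disjointness of P1, P2 and of Q1, Q2
    have hdisjP12 : List.Disjoint P1.edges P2.edges := by
      intro x hx1 hx2; exact hdisjP hx1 (hP2sub hx2)
    have hdisjQ12 : List.Disjoint Q2.edges Q1.edges := by
      intro x hx2 hx1; exact hdisjQ hx1 (hQ2sub hx2)
    -- the new walks
    set W₁ : H.Walk u v := P1.append Q2 with hW₁
    set W₂ : H.Walk u v := Q1.append P2 with hW₂
    -- darts subsets
    have hP1darts : P1.darts ⊆ P.darts := Walk.darts_takeUntil_subset P haP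
    have hP2darts : P2.darts ⊆ P.darts := fun d hd =>
      Walk.darts_dropUntil_subset P haP (Walk.darts_dropUntil_subset Pa hbPa hd)
    have hQ1darts : Q1.darts ⊆ Q.darts := Walk.darts_takeUntil_subset Q hbQ
    have hQ2darts : Q2.darts ⊆ Q.darts := fun d hd =>
      Walk.darts_dropUntil_subset Q hbQ (Walk.darts_dropUntil_subset Qb haQb hd)
    -- the invariant for the new pair
    have hinv' : ∀ d₁' ∈ W₁.bypass.darts, ∀ d₂' ∈ W₂.bypass.darts,
        d₁'.edge = d₂'.edge → d₂' = d₁'.symm := by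
      intro x hx y hy hxy
      have hx' := W₁.darts_bypass_subset hx
      have hy' := W₂.darts_bypass_subset hy
      rw [hW₁, Walk.darts_append, List.mem_append] at hx'
      rw [hW₂, Walk.darts_append, List.mem_append] at hy'
      rcases hx' with hx' | hx' <;> rcases hy' with hy' | hy'
      · exact hinv x (hP1darts hx') y (hQ1darts hy') hxy
      · exfalso
        have hxe : x.edge ∈ P1.edges := List.mem_map_of_mem (f := Dart.edge) hx'
        have hye : x.edge ∈ P2.edges := by rw [hxy]; exact List.mem_map_of_mem (f := Dart.edge) hy'
        exact hdisjP12 hxe hye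
      · exfalso
        have hxe : x.edge ∈ Q2.edges := List.mem_map_of_mem (f := Dart.edge) hx'
        have hye : x.edge ∈ Q1.edges := by rw [hxy]; exact List.mem_map_of_mem (f := Dart.edge) hy'
        exact hdisjQ12 hxe hye
      · have := hinv y (hP2darts hy') x (hQ2darts hx') hxy.symm
        rw [this, Dart.symm_symm]
    -- intersection estimate
    have hsubset : W₁.bypass.edges.toFinset ∩ W₂.bypass.edges.toFinset ⊆
        (P.edges.toFinset ∩ Q.edges.toFinset).erase g := by
      intro h hmem
      rw [Finset.mem_inter, List.mem_toFinset, List.mem_toFinset] at hmem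
      obtain ⟨h1, h2⟩ := hmem
      have h1' := W₁.edges_bypass_subset h1
      have h2' := W₂.edges_bypass_subset h2
      rw [hW₁, Walk.edges_append, List.mem_append] at h1'
      rw [hW₂, Walk.edges_append, List.mem_append] at h2'
      rw [Finset.mem_erase, Finset.mem_inter, List.mem_toFinset, List.mem_toFinset]
      rcases h1' with h1' | h1' <;> rcases h2' with h2' | h2'
      · refine ⟨fun hgh => ?_, hPsplit ▸ List.mem_append_left _ h1',
          hQsplit ▸ List.mem_append_left _ h2'⟩
        subst hgh; exact hgP1 h1'
      · exact absurd h2' (fun hh => hdisjP12 h1' hh)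
      · exact absurd h1' (fun hh => hdisjQ12 hh h2')
      · refine ⟨fun hgh => ?_, hPsplit ▸ List.mem_append_right _ (hP2sub h2'),
          hQsplit ▸ List.mem_append_right _ (hQ2sub h1')⟩
        subst hgh; exact hgP2 h2'
    -- cardinality decreases
    have hgmem : g ∈ P.edges.toFinset ∩ Q.edges.toFinset := by
      rw [Finset.mem_inter, List.mem_toFinset, List.mem_toFinset]; exact ⟨hgP, hgQ⟩
    have hcard' : (W₁.bypass.edges.toFinset ∩ W₂.bypass.edges.toFinset).card ≤ n := by
      calc (W₁.bypass.edges.toFinset ∩ W₂.bypass.edges.toFinset).card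
          ≤ ((P.edges.toFinset ∩ Q.edges.toFinset).erase g).card :=
            Finset.card_le_card hsubset
        _ = (P.edges.toFinset ∩ Q.edges.toFinset).card - 1 :=
            Finset.card_erase_of_mem hgmem
        _ ≤ n := by omega
    exact ih W₁.bypass W₂.bypass W₁.bypass_isPath W₂.bypass_isPath hinv' hcard'

/-- Removing one edge from a graph: any two vertices joined by a walk are still joined,
possibly through the endpoints of the removed edge. -/
lemma reachable_cases_deleteEdge {x y w₁ w₂ : V} (W : H.Walk x y) :
    (H.deleteEdges {s(w₁, w₂)}).Reachable x y ∨
    ((H.deleteEdges {s(w₁, w₂)}).Reachable x w₁ ∧ (H.deleteEdges {s(w₁, w₂)}).Reachable w₂ y) ∨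
    ((H.deleteEdges {s(w₁, w₂)}).Reachable x w₂ ∧ (H.deleteEdges {s(w₁, w₂)}).Reachable w₁ y) := by
  induction W with
  | nil => exact Or.inl (Reachable.refl _)
  | @cons a b c hadj W ih =>
    by_cases hf : s(a, b) = s(w₁, w₂)
    · rw [Sym2.eq_iff] at hf
      rcases hf with ⟨rfl, rfl⟩ | ⟨rfl, rfl⟩
      · -- a = w₁, b = w₂
        rcases ih with h | ⟨h1, h2⟩ | ⟨h1, h2⟩
        · exact Or.inr (Or.inl ⟨Reachable.refl _, h⟩)
        · exact Or.inr (Or.inl ⟨Reachable.refl _, h2⟩)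
        · exact Or.inl h2
      · -- a = w₂, b = w₁
        rcases ih with h | ⟨h1, h2⟩ | ⟨h1, h2⟩
        · exact Or.inr (Or.inr ⟨Reachable.refl _, h⟩)
        · exact Or.inl h2
        · exact Or.inr (Or.inr ⟨Reachable.refl _, h2⟩)
    · have hadj' : (H.deleteEdges {s(w₁, w₂)}).Adj a b := by
        rw [deleteEdges_adj]; exact ⟨hadj, by simpa using hf⟩
      have hr : (H.deleteEdges {s(w₁, w₂)}).Reachable a b := hadj'.reachable
      rcases ih with h | ⟨h1, h2⟩ | ⟨h1, h2⟩
      · exact Or.inl (hr.trans h)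
      · exact Or.inr (Or.inl ⟨hr.trans h1, h2⟩)
      · exact Or.inr (Or.inr ⟨hr.trans h1, h2⟩)


lemma key_step {G : SimpleGraph V} {u v a b : V} (hconn : G.Connected)
    (huv : G.Adj u v)
    (hbre : (G.deleteEdges {s(u, v)}).Connected)
    (hpair : (G.deleteEdges {s(a, b)}).Connected →
      (G.deleteEdges {s(u, v), s(a, b)}).Connected)
    (hne : s(a, b) ≠ s(u, v))
    (hua : ((G.deleteEdges {s(u, v)}).deleteEdges {s(a, b)}).Reachable u a)
    (hbv : ((G.deleteEdges {s(u, v)}).deleteEdges {s(a, b)}).Reachable b v) :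
    ((G.deleteEdges {s(u, v)}).deleteEdges {s(a, b)}).Reachable u v := by
  have hH'eq : (G.deleteEdges {s(u, v)}).deleteEdges {s(a, b)}
      = G.deleteEdges {s(u, v), s(a, b)} := by
    rw [deleteEdges_deleteEdges, Set.singleton_union]
  have hle : (G.deleteEdges {s(u, v)}).deleteEdges {s(a, b)} ≤ G.deleteEdges {s(a, b)} := by
    intro x y h
    rw [deleteEdges_adj] at h ⊢
    exact ⟨(deleteEdges_adj).mp h.1 |>.1, h.2⟩
  have hxu : ∀ x, (G.deleteEdges {s(a, b)}).Reachable x u := by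
    intro x
    obtain ⟨Wx⟩ := hbre.preconnected x u
    rcases reachable_cases_deleteEdge (w₁ := a) (w₂ := b) Wx with h | ⟨h1, h2⟩ | ⟨h1, h2⟩
    · exact h.mono hle
    · exact ((h1.trans hua.symm).mono hle)
    · have hAdj : (G.deleteEdges {s(a, b)}).Adj u v := by
        rw [deleteEdges_adj]
        exact ⟨huv, by simpa using hne.symm⟩
      exact ((h1.trans hbv).mono hle).trans hAdj.reachable.symm
  have hKconn : (G.deleteEdges {s(a, b)}).Connected := by
    haveI : Nonempty V := hconn.nonempty
    exact ⟨fun x y => (hxu x).trans (hxu y).symm⟩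
  have hfin := hpair hKconn
  rw [← hH'eq] at hfin
  exact hfin.preconnected u v

theorem exists_two_cycles_meeting_in_edge'
    {V : Type*} [Fintype V] [DecidableEq V] (G : SimpleGraph V) (hconn : G.Connected)
    (e : Sym2 V) (he : e ∈ G.edgeSet)
    (hbre : (G.deleteEdges {e}).Connected)
    (hpairs : ∀ e' ∈ G.edgeSet, e' ≠ e → (G.deleteEdges {e'}).Connected →
      (G.deleteEdges {e, e'}).Connected) :
    ∃ c₁ c₂ : Finset (Sym2 V), G.IsCycleSpaceElement c₁ ∧ G.IsCycleSpaceElement c₂ ∧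
      c₁ ∩ c₂ = {e} := by
  induction e using Sym2.ind with
  | _ u v =>
  have huv : G.Adj u v := he
  have hne : u ≠ v := huv.ne
  set H := G.deleteEdges {s(u, v)} with hHdef
  -- the hypothesis needed for the residual path lemma
  have hyp : ∀ f ∈ H.edgeSet, (H.deleteEdges {f}).Reachable u v := by
    intro f hf
    rw [hHdef, edgeSet_deleteEdges] at hf
    revert hf
    induction f using Sym2.ind with
    | _ w₁ w₂ =>
    intro hf
    obtain ⟨hfG, hfne⟩ := hf
    rw [Set.mem_singleton_iff] at hfne
    obtain ⟨W⟩ := hbre.preconnected u v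
    rcases reachable_cases_deleteEdge (w₁ := w₁) (w₂ := w₂) W with h | ⟨h1, h2⟩ | ⟨h1, h2⟩
    · exact h
    · exact key_step hconn huv hbre (hpairs s(w₁, w₂) hfG hfne) hfne h1 h2
    · have hswap : s(w₁, w₂) = s(w₂, w₁) := Sym2.eq_swap.symm
      rw [hHdef]
      rw [hswap] at h1 h2 hfG hfne ⊢
      exact key_step hconn huv hbre (hpairs s(w₂, w₁) hfG hfne) hfne h1 h2
  -- a first path from u to v in H
  obtain ⟨W₀⟩ := hbre.preconnected u v
  set P : H.Walk u v := W₀.bypass with hPdef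
  have hP : P.IsPath := W₀.bypass_isPath
  -- the residual path
  obtain ⟨Q, hQ, hQres⟩ := exists_residual_path P hP hyp
  -- symmetric form of the residual property
  have hinv : ∀ d₁ ∈ P.darts, ∀ d₂ ∈ Q.darts, d₁.edge = d₂.edge → d₂ = d₁.symm := by
    intro d₁ hd₁ d₂ hd₂ hde
    have h1 : d₂.edge ∈ P.edges := by
      rw [← hde]; exact List.mem_map_of_mem (f := Dart.edge) hd₁
    have h2 : d₂.symm ∈ P.darts := hQres d₂ hd₂ h1
    have h3 : d₂.symm.edge = d₁.edge := by rw [Dart.edge_symm, hde]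
    have hmapnodup : (P.darts.map Dart.edge).Nodup := hP.isTrail.edges_nodup
    have h4 : d₂.symm = d₁ := List.inj_on_of_nodup_map hmapnodup h2 hd₁ h3
    rw [← h4, Dart.symm_symm]
  -- two edge-disjoint paths
  obtain ⟨P', Q', hP', hQ', hdisj⟩ := exists_disjoint_paths
    (P.edges.toFinset ∩ Q.edges.toFinset).card P Q hP hQ hinv le_rfl
  -- build the two cycle space elements
  have hHsub : H.edgeSet ⊆ G.edgeSet := by
    rw [hHdef, edgeSet_deleteEdges]; exact Set.diff_subset
  have hEnotH : s(u, v) ∉ H.edgeSet := by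
    rw [hHdef, edgeSet_deleteEdges]; simp
  have hface : ∀ (R : H.Walk u v), R.IsPath →
      G.IsCycleSpaceElement (insert s(u, v) R.edges.toFinset) ∧
        s(u, v) ∉ R.edges.toFinset := by
    intro R hR
    have hnotin : s(u, v) ∉ R.edges.toFinset := by
      rw [List.mem_toFinset]
      intro hmem
      exact hEnotH (R.edges_subset_edgeSet hmem)
    refine ⟨⟨?_, ?_⟩, hnotin⟩
    · intro g hg
      rcases Finset.mem_insert.mp hg with rfl | hg
      · exact he
      · exact hHsub (R.edges_subset_edgeSet (List.mem_toFinset.mp hg))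
    · intro x
      rw [Finset.filter_insert]
      by_cases hx : x ∈ s(u, v)
      · rw [if_pos hx, Finset.card_insert_of_notMem
          (fun hc => hnotin (Finset.mem_of_mem_filter _ hc)), Nat.even_add_one,
          trail_parity R hR.isTrail x]
        rw [Sym2.mem_iff] at hx
        rcases hx with rfl | rfl
        · intro hcon; exact hne (hcon.mp rfl)
        · intro hcon; exact hne ((hcon.mpr rfl).symm)
      · rw [if_neg hx]
        rw [trail_parity R hR.isTrail x]
        have hxu : x ≠ u := fun h => hx (by simp [h])
        have hxv : x ≠ v := fun h => hx (by simp [h])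
        simp [hxu, hxv]
  obtain ⟨hc₁, hnotin₁⟩ := hface P' hP'
  obtain ⟨hc₂, hnotin₂⟩ := hface Q' hQ'
  refine ⟨insert s(u, v) P'.edges.toFinset, insert s(u, v) Q'.edges.toFinset, hc₁, hc₂, ?_⟩
  ext g
  simp only [Finset.mem_inter, Finset.mem_insert, Finset.mem_singleton]
  constructor
  · rintro ⟨h1 | h1, h2 | h2⟩
    · exact h1
    · exact h1
    · exact h2
    · exfalso
      have : g ∈ P'.edges.toFinset ∩ Q'.edges.toFinset := Finset.mem_inter.mpr ⟨h1, h2⟩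
      rw [hdisj] at this
      exact absurd this (Finset.notMem_empty g)
  · rintro rfl
    exact ⟨Or.inl rfl, Or.inl rfl⟩


end CycleSpaceHelpers

/-- If `e` is an edge of a finite connected graph `Γ` such that `Γ \ {e}` is connected and
`Γ \ {e, e'}` is connected for every non-bridge edge `e' ≠ e`, then there exist two
elements of the cycle space whose intersection is exactly `{e}`. -/
theorem exists_two_cycles_meeting_in_edge
    {V : Type*} [Fintype V] [DecidableEq V] (G : SimpleGraph V) (hconn : G.Connected)
    (e : Sym2 V) (he : e ∈ G.edgeSet)
    (hbre : (G.deleteEdges {e}).Connected)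
    (hpairs : ∀ e' ∈ G.edgeSet, e' ≠ e → (G.deleteEdges {e'}).Connected →
      (G.deleteEdges {e, e'}).Connected) :
    ∃ c₁ c₂ : Finset (Sym2 V), G.IsCycleSpaceElement c₁ ∧ G.IsCycleSpaceElement c₂ ∧
      c₁ ∩ c₂ = {e} :=
  CycleSpaceHelpers.exists_two_cycles_meeting_in_edge' G hconn e he hbre hpairs
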